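/- The map Ψ: SO(3) × (R/τ*Z) → M₃, Ψ(M,θ) = M x*(·−θ), is a bijection, where x* is a non-circular non-rectilinear periodic solution of the central force equation in R³ lying in the plane x₃ = 0, normalized so that x*(0) = (max|x*|, 0, 0) with positive angular momentum, τ* is the minimal period of |x*|, and M₃ = {M x*(·−θ) : M ∈ O(3), θ ∈ R}. -/

import Mathlib

open Classical Matrix

/-- The Euclidean norm on `ℝ³`. -/
noncomputable def en3 (v : Fin 3 → ℝ) : ℝ := Real.sqrt (∑ i, v i ^ 2)

/-- The map `φ(v) = f(|v|) v/|v|`, `φ(0) = 0`. -/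
noncomputable def phiMap (f : ℝ → ℝ) (v : Fin 3 → ℝ) : Fin 3 → ℝ :=
  if v = 0 then 0 else (f (en3 v) / en3 v) • v

/-! ### Auxiliary definitions and lemmas -/

/-- sum of squares -/
noncomputable def s3 (v : Fin 3 → ℝ) : ℝ := ∑ i, v i ^ 2

/-- cross product -/
noncomputable def cr (a b : Fin 3 → ℝ) : Fin 3 → ℝ :=
  ![a 1 * b 2 - a 2 * b 1, a 2 * b 0 - a 0 * b 2, a 0 * b 1 - a 1 * b 0]

/-- dot product -/
noncomputable def d3 (a b : Fin 3 → ℝ) : ℝ := ∑ i, a i * b i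

lemma s3_nonneg (v : Fin 3 → ℝ) : 0 ≤ s3 v :=
  Finset.sum_nonneg fun _ _ => sq_nonneg _

lemma en3_sq (v : Fin 3 → ℝ) : en3 v ^ 2 = s3 v :=
  Real.sq_sqrt (s3_nonneg v)

lemma en3_nonneg (v : Fin 3 → ℝ) : 0 ≤ en3 v := Real.sqrt_nonneg _

lemma s3_pos {v : Fin 3 → ℝ} (hv : v ≠ 0) : 0 < s3 v := by
  rcases Function.ne_iff.1 hv with ⟨i, hi⟩
  have h1 : v i ^ 2 ≤ s3 v := Finset.single_le_sum (fun j _ => sq_nonneg (v j)) (by simp)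
  have hi' : v i ≠ 0 := by simpa using hi
  nlinarith [pow_pos (abs_pos.2 hi') 2, sq_abs (v i)]

lemma en3_pos (v : Fin 3 → ℝ) (hv : v ≠ 0) : 0 < en3 v :=
  Real.sqrt_pos.2 (s3_pos hv)

lemma en3_eq_of_s3 {v w : Fin 3 → ℝ} (h : s3 v = s3 w) : en3 v = en3 w := by
  unfold en3
  rw [show (∑ i, v i ^2) = s3 v from rfl, show (∑ i, w i ^2) = s3 w from rfl, h]

lemma s3_eq_of_en3 {v w : Fin 3 → ℝ} (h : en3 v = en3 w) : s3 v = s3 w := by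
  rw [← en3_sq, ← en3_sq, h]

lemma d3_mulVec (M : Matrix (Fin 3) (Fin 3) ℝ) (hM : Mᵀ * M = 1) (v w : Fin 3 → ℝ) :
    d3 (M *ᵥ v) (M *ᵥ w) = d3 v w := by
  have : d3 (M *ᵥ v) (M *ᵥ w) = (M *ᵥ v) ⬝ᵥ (M *ᵥ w) := rfl
  rw [this, dotProduct_mulVec, ← mulVec_transpose, mulVec_mulVec, hM, one_mulVec]
  rfl

lemma s3_mulVec (M : Matrix (Fin 3) (Fin 3) ℝ) (hM : Mᵀ * M = 1) (v : Fin 3 → ℝ) :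
    s3 (M *ᵥ v) = s3 v := by
  have h := d3_mulVec M hM v v
  simpa [d3, s3, sq] using h

lemma en3_mulVec (M : Matrix (Fin 3) (Fin 3) ℝ) (hM : Mᵀ * M = 1) (v : Fin 3 → ℝ) :
    en3 (M *ᵥ v) = en3 v := en3_eq_of_s3 (s3_mulVec M hM v)

lemma orth_mul_comm {M : Matrix (Fin 3) (Fin 3) ℝ} (hM : Mᵀ * M = 1) : M * Mᵀ = 1 :=
  mul_eq_one_comm.1 hM

lemma mulVec_ne_zero (M : Matrix (Fin 3) (Fin 3) ℝ) (hM : Mᵀ * M = 1) {v : Fin 3 → ℝ}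
    (hv : v ≠ 0) : M *ᵥ v ≠ 0 := by
  intro h
  apply hv
  have : Mᵀ *ᵥ (M *ᵥ v) = v := by rw [mulVec_mulVec, hM, one_mulVec]
  rw [h, mulVec_zero] at this
  exact this.symm

lemma phiMap_mulVec (f : ℝ → ℝ) (M : Matrix (Fin 3) (Fin 3) ℝ) (hM : Mᵀ * M = 1)
    (v : Fin 3 → ℝ) : phiMap f (M *ᵥ v) = M *ᵥ phiMap f v := by
  by_cases hv : v = 0
  · simp [hv, phiMap]
  · rw [phiMap, phiMap, if_neg hv, if_neg (mulVec_ne_zero M hM hv), en3_mulVec M hM,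
      mulVec_smul]

lemma hasDerivAt_mulVec (M : Matrix (Fin 3) (Fin 3) ℝ) {g : ℝ → Fin 3 → ℝ} {g' : Fin 3 → ℝ}
    {t : ℝ} (hg : HasDerivAt g g' t) :
    HasDerivAt (fun s => M *ᵥ g s) (M *ᵥ g') t := by
  rw [hasDerivAt_pi] at hg ⊢
  intro i
  simp only [Matrix.mulVec, dotProduct]
  exact HasDerivAt.fun_sum fun j _ => (hg j).const_mul _

lemma s3_phiMap (f : ℝ → ℝ) {v : Fin 3 → ℝ} (hv : v ≠ 0) :
    s3 (phiMap f v) = f (en3 v) ^ 2 := by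
  rw [phiMap, if_neg hv]
  have h1 : en3 v ≠ 0 := (en3_pos v hv).ne'
  have h2 : s3 ((f (en3 v) / en3 v) • v) = (f (en3 v) / en3 v)^2 * s3 v := by
    simp [s3, Finset.mul_sum, mul_pow]
  rw [h2, ← en3_sq]
  field_simp

lemma lagrange (a b : Fin 3 → ℝ) : s3 (cr a b) = s3 a * s3 b - d3 a b ^ 2 := by
  simp [s3, cr, d3, Fin.sum_univ_three]; ring

/-- if cross is zero and b ≠ 0 then a is a multiple of b -/
lemma cr_zero_parallel {a b : Fin 3 → ℝ} (h : cr a b = 0) (hb : b ≠ 0) :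
    a = (d3 a b / s3 b) • b := by
  have hs : s3 b ≠ 0 := (s3_pos hb).ne'
  have h0 := congrFun h 0
  have h1 := congrFun h 1
  have h2 := congrFun h 2
  simp [cr] at h0 h1 h2
  have hsb : s3 b = b 0 ^2 + b 1 ^2 + b 2^2 := by simp [s3, Fin.sum_univ_three]
  have hd : d3 a b = a 0 * b 0 + a 1 * b 1 + a 2 * b 2 := by simp [d3, Fin.sum_univ_three]
  have key : ∀ i, s3 b * a i = d3 a b * b i := by
    intro i
    fin_cases i
    · show s3 b * a 0 = d3 a b * b 0
      rw [hsb, hd]; linear_combination b 1 * h2 - b 2 * h1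
    · show s3 b * a 1 = d3 a b * b 1
      rw [hsb, hd]; linear_combination b 2 * h0 - b 0 * h2
    · show s3 b * a 2 = d3 a b * b 2
      rw [hsb, hd]; linear_combination b 0 * h1 - b 1 * h0
  funext i
  have := key i
  simp only [Pi.smul_apply, smul_eq_mul]
  field_simp
  linarith [this]

lemma cr_ne_zero_of_li {a b : Fin 3 → ℝ} (h : LinearIndependent ℝ ![a, b]) :
    cr a b ≠ 0 := by
  rw [LinearIndependent.pair_iff] at h
  intro hc
  by_cases hb : b = 0
  · exact one_ne_zero ((h 0 1 (by simp [hb])).2)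
  · obtain ⟨k, hk⟩ : ∃ k, a = k • b := ⟨_, cr_zero_parallel hc hb⟩
    exact one_ne_zero ((h 1 (-k) (by rw [one_smul, neg_smul, hk]; abel)).1)

/-- w orthogonal to a and b implies cr (cr a b) w = 0 -/
lemma cr_cr_perp {a b w : Fin 3 → ℝ} (ha : d3 w a = 0) (hb : d3 w b = 0) :
    cr (cr a b) w = 0 := by
  simp [d3, Fin.sum_univ_three] at ha hb
  funext i
  fin_cases i
  · show (cr a b) 1 * w 2 - (cr a b) 2 * w 1 = 0
    simp [cr]; linear_combination b 0 * ha - a 0 * hb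
  · show (cr a b) 2 * w 0 - (cr a b) 0 * w 2 = 0
    simp [cr]; linear_combination b 1 * ha - a 1 * hb
  · show (cr a b) 0 * w 1 - (cr a b) 1 * w 0 = 0
    simp [cr]; linear_combination b 2 * ha - a 2 * hb

/-- the matrix with columns a, b, cr a b -/
noncomputable def colM (a b : Fin 3 → ℝ) : Matrix (Fin 3) (Fin 3) ℝ :=
  (Matrix.of ![a, b, cr a b])ᵀ

set_option maxHeartbeats 2000000 in
lemma colM_gram (a b a' b' : Fin 3 → ℝ)
    (haa : s3 a = s3 a') (hbb : s3 b = s3 b') (hab : d3 a b = 0) (hab' : d3 a' b' = 0) :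
    (colM a b)ᵀ * colM a b = (colM a' b')ᵀ * colM a' b' := by
  simp [s3, d3, Fin.sum_univ_three] at haa hbb hab hab'
  ext i j
  fin_cases i <;> fin_cases j <;>
    simp [colM, Matrix.mul_apply, Fin.sum_univ_three, cr, Matrix.vecHead, Matrix.vecTail] <;>
    first
      | ring1
      | linear_combination haa
      | linear_combination hbb
      | linear_combination hab - hab'
      | linear_combination (b 0^2+b 1^2+b 2^2)*haa + (a' 0^2+a' 1^2+a' 2^2)*hbb
          - (a 0*b 0+a 1*b 1+a 2*b 2)*hab + (a' 0*b' 0+a' 1*b' 1+a' 2*b' 2)*hab'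

lemma colM_det (a b : Fin 3 → ℝ) : (colM a b).det = s3 (cr a b) := by
  rw [colM, Matrix.det_transpose, Matrix.det_fin_three]
  simp [cr, s3, Fin.sum_univ_three, Matrix.vecHead, Matrix.vecTail]
  ring

lemma colM_mulVec_e0 (a b : Fin 3 → ℝ) : colM a b *ᵥ ![1,0,0] = a := by
  funext i
  simp [colM, Matrix.mulVec, dotProduct, Fin.sum_univ_three]

lemma colM_mulVec_e1 (a b : Fin 3 → ℝ) : colM a b *ᵥ ![0,1,0] = b := by
  funext i
  simp [colM, Matrix.mulVec, dotProduct, Fin.sum_univ_three]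

/-- construction of the rotation mapping (a,b) to (a',b') -/
lemma rot_exists (a b a' b' : Fin 3 → ℝ) (hc : cr a b ≠ 0)
    (haa : s3 a = s3 a') (hbb : s3 b = s3 b') (hab : d3 a b = 0) (hab' : d3 a' b' = 0) :
    ∃ R : Matrix (Fin 3) (Fin 3) ℝ,
      Rᵀ * R = 1 ∧ R.det = 1 ∧ R *ᵥ a = a' ∧ R *ᵥ b = b' := by
  set M := colM a b with hM
  set M' := colM a' b' with hM'
  have hdet : M.det = s3 (cr a b) := colM_det a b
  have hdet' : M'.det = s3 (cr a' b') := colM_det a' b'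
  have hcc : s3 (cr a b) = s3 (cr a' b') := by
    rw [lagrange, lagrange, haa, hbb, hab, hab']
  have hpos : 0 < s3 (cr a b) := s3_pos hc
  have hMdet : IsUnit M.det := by rw [hdet]; exact (isUnit_iff_ne_zero.2 hpos.ne')
  have hMM : M * M⁻¹ = 1 := Matrix.mul_nonsing_inv M hMdet
  have hMM' : M⁻¹ * M = 1 := Matrix.nonsing_inv_mul M hMdet
  have hgram : Mᵀ * M = M'ᵀ * M' := colM_gram a b a' b' haa hbb hab hab'
  refine ⟨M' * M⁻¹, ?_, ?_, ?_, ?_⟩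
  · calc (M' * M⁻¹)ᵀ * (M' * M⁻¹) = M⁻¹ᵀ * (M'ᵀ * (M' * M⁻¹)) := by
          rw [Matrix.transpose_mul, Matrix.mul_assoc]
      _ = M⁻¹ᵀ * ((M'ᵀ * M') * M⁻¹) := by rw [Matrix.mul_assoc]
      _ = M⁻¹ᵀ * ((Mᵀ * M) * M⁻¹) := by rw [hgram]
      _ = M⁻¹ᵀ * (Mᵀ * (M * M⁻¹)) := by rw [Matrix.mul_assoc]
      _ = M⁻¹ᵀ * Mᵀ := by rw [hMM, Matrix.mul_one]
      _ = (M * M⁻¹)ᵀ := by rw [Matrix.transpose_mul]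
      _ = 1 := by rw [hMM, Matrix.transpose_one]
  · rw [Matrix.det_mul, hdet', ← hcc, Matrix.det_nonsing_inv, hdet]
    rw [Ring.inverse_eq_inv']
    field_simp
  · have h1 : M⁻¹ *ᵥ a = ![1,0,0] := by
      rw [← colM_mulVec_e0 a b, ← hM, mulVec_mulVec, hMM', one_mulVec]
    rw [← mulVec_mulVec, h1, hM', colM_mulVec_e0]
  · have h1 : M⁻¹ *ᵥ b = ![0,1,0] := by
      rw [← colM_mulVec_e1 a b, ← hM, mulVec_mulVec, hMM', one_mulVec]
    rw [← mulVec_mulVec, h1, hM', colM_mulVec_e1]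

lemma cr_anticomm (x y : Fin 3 → ℝ) : cr x y = -(cr y x) := by
  funext i; fin_cases i <;> simp [cr] <;> ring

lemma d3_cr_left (a b : Fin 3 → ℝ) : d3 (cr a b) a = 0 := by
  simp [d3, cr, Fin.sum_univ_three]; ring

lemma d3_cr_right (a b : Fin 3 → ℝ) : d3 (cr a b) b = 0 := by
  simp [d3, cr, Fin.sum_univ_three]; ring

/-- an SO(3) matrix fixing two linearly independent vectors is the identity -/
lemma fix_eq_one (S : Matrix (Fin 3) (Fin 3) ℝ) (hS : Sᵀ * S = 1) (hdet : S.det = 1)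
    (a b : Fin 3 → ℝ) (hc : cr a b ≠ 0) (ha : S *ᵥ a = a) (hb : S *ᵥ b = b) : S = 1 := by
  set c := cr a b with hcdef
  have hw1 : d3 (S *ᵥ c) a = 0 := by
    have := d3_mulVec S hS c a
    rw [ha] at this
    rw [this]; exact d3_cr_left a b
  have hw2 : d3 (S *ᵥ c) b = 0 := by
    have := d3_mulVec S hS c b
    rw [hb] at this
    rw [this]; exact d3_cr_right a b
  have hcw : cr c (S *ᵥ c) = 0 := cr_cr_perp hw1 hw2
  have hwc : cr (S *ᵥ c) c = 0 := by rw [cr_anticomm, hcw]; simp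
  set γ := d3 (S *ᵥ c) c / s3 c with hγdef
  have hw : S *ᵥ c = γ • c := cr_zero_parallel hwc hc
  have hsc : 0 < s3 c := s3_pos hc
  have hγsq : γ ^ 2 = 1 := by
    have h1 : s3 (S *ᵥ c) = s3 c := s3_mulVec S hS c
    have h2 : s3 (γ • c) = γ^2 * s3 c := by simp [s3, Finset.mul_sum, mul_pow]
    rw [hw, h2] at h1
    exact mul_right_cancel₀ hsc.ne' (by rw [h1, one_mul])
  have hSM : S * colM a b = colM a b * Matrix.diagonal ![1,1,γ] := by
    ext i j
    rw [Matrix.mul_apply, Matrix.mul_apply]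
    fin_cases j
    · have h := congrFun ha i
      simp [Matrix.mulVec, dotProduct, Fin.sum_univ_three] at h
      simp [colM, Matrix.diagonal, Fin.sum_univ_three, Matrix.vecHead, Matrix.vecTail]
      linarith [h]
    · have h := congrFun hb i
      simp [Matrix.mulVec, dotProduct, Fin.sum_univ_three] at h
      simp [colM, Matrix.diagonal, Fin.sum_univ_three, Matrix.vecHead, Matrix.vecTail]
      linarith [h]
    · have h := congrFun hw i
      simp [Matrix.mulVec, dotProduct, Fin.sum_univ_three] at h
      simp [colM, Matrix.diagonal, Fin.sum_univ_three, Matrix.vecHead, Matrix.vecTail]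
      linarith [h]
  have hγ1 : γ = 1 := by
    have hd := congrArg Matrix.det hSM
    rw [Matrix.det_mul, Matrix.det_mul, hdet, one_mul, Matrix.det_diagonal] at hd
    have he : (∏ i, (![1,1,γ] : Fin 3 → ℝ) i) = γ := by
      simp [Fin.prod_univ_three]
    rw [he, colM_det] at hd
    have := mul_left_cancel₀ (by positivity : s3 (cr a b) ≠ 0)
      (by linarith [hd] : s3 (cr a b) * 1 = s3 (cr a b) * γ)
    linarith
  have hdiag : Matrix.diagonal ![(1:ℝ),1,γ] = 1 := by
    rw [hγ1]
    have : ![(1:ℝ),1,1] = fun _ => 1 := by funext i; fin_cases i <;> rfl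
    rw [this, Matrix.diagonal_one]
  rw [hdiag, Matrix.mul_one] at hSM
  have hMdet : IsUnit (colM a b).det := by
    rw [colM_det]; exact isUnit_iff_ne_zero.2 hsc.ne'
  calc S = S * ((colM a b) * (colM a b)⁻¹) := by
        rw [Matrix.mul_nonsing_inv _ hMdet, Matrix.mul_one]
    _ = (S * colM a b) * (colM a b)⁻¹ := by rw [Matrix.mul_assoc]
    _ = (colM a b) * (colM a b)⁻¹ := by rw [hSM]
    _ = 1 := Matrix.mul_nonsing_inv _ hMdet

lemma dot_zero_at_max (x v : ℝ → Fin 3 → ℝ) (t₀ : ℝ) (hxv : ∀ t, HasDerivAt x (v t) t)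
    (hmax : ∀ t, s3 (x t) ≤ s3 (x t₀)) : d3 (x t₀) (v t₀) = 0 := by
  have hd : HasDerivAt (fun t => s3 (x t)) (∑ i, (2:ℕ) * x t₀ i ^ 1 * v t₀ i) t₀ := by
    have he : (fun t => s3 (x t)) = fun t => ∑ i, (x t i) ^ 2 := rfl
    rw [he]
    exact HasDerivAt.fun_sum fun i _ => ((hasDerivAt_pi.1 (hxv t₀)) i).fun_pow 2
  have hloc : IsLocalMax (fun t => s3 (x t)) t₀ := Filter.Eventually.of_forall hmax
  have h0 := hloc.hasDerivAt_eq_zero hd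
  have he : d3 (x t₀) (v t₀) = ∑ i, x t₀ i * v t₀ i := rfl
  rw [he]
  simp [Fin.sum_univ_three] at h0 ⊢
  linarith

lemma cr_const (x v p : ℝ → Fin 3 → ℝ) (c : ℝ → ℝ)
    (hxv : ∀ t, HasDerivAt x (v t) t)
    (hp : ∀ t, HasDerivAt p (fun i => c t * x t i) t)
    (hpar : ∀ t, cr (v t) (p t) = 0) :
    ∀ t, cr (x t) (p t) = cr (x 0) (p 0) := by
  have key : ∀ (i j : Fin 3), ∀ t : ℝ,
      HasDerivAt (fun s => x s i * p s j - x s j * p s i)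
        ((v t i * p t j - v t j * p t i) + c t * (x t i * x t j - x t j * x t i)) t := by
    intro i j t
    have hxi := (hasDerivAt_pi.1 (hxv t)) i
    have hxj := (hasDerivAt_pi.1 (hxv t)) j
    have hpi := (hasDerivAt_pi.1 (hp t)) i
    have hpj := (hasDerivAt_pi.1 (hp t)) j
    have := ((hxi.fun_mul hpj).fun_sub (hxj.fun_mul hpi))
    exact this.congr_deriv (by ring)
  have const : ∀ (i j : Fin 3), (∀ t, v t i * p t j - v t j * p t i = 0) →
      ∀ t, x t i * p t j - x t j * p t i = x 0 i * p 0 j - x 0 j * p 0 i := by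
    intro i j hz t
    have hder : ∀ s, HasDerivAt (fun s => x s i * p s j - x s j * p s i) 0 s := by
      intro s
      have := key i j s
      rw [hz s] at this
      convert this using 1; ring
    exact is_const_of_deriv_eq_zero (fun s => (hder s).differentiableAt)
      (fun s => (hder s).deriv) t 0
  intro t
  funext i
  have h0 : ∀ s, v s 1 * p s 2 - v s 2 * p s 1 = 0 := by
    intro s; have := congrFun (hpar s) 0; simpa [cr] using this
  have h1 : ∀ s, v s 2 * p s 0 - v s 0 * p s 2 = 0 := by
    intro s; have := congrFun (hpar s) 1; simpa [cr] using this
  have h2 : ∀ s, v s 0 * p s 1 - v s 1 * p s 0 = 0 := by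
    intro s; have := congrFun (hpar s) 2; simpa [cr] using this
  fin_cases i
  · show x t 1 * p t 2 - x t 2 * p t 1 = x 0 1 * p 0 2 - x 0 2 * p 0 1
    exact const 1 2 h0 t
  · show x t 2 * p t 0 - x t 0 * p t 2 = x 0 2 * p 0 0 - x 0 0 * p 0 2
    exact const 2 0 h1 t
  · show x t 0 * p t 1 - x t 1 * p t 0 = x 0 0 * p 0 1 - x 0 1 * p 0 0
    exact const 0 1 h2 t

lemma cr_smul_self (k : ℝ) (v : Fin 3 → ℝ) : cr v (k • v) = 0 := by
  funext i; fin_cases i <;> simp [cr] <;> ring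

lemma d3_smul_right (k : ℝ) (x v : Fin 3 → ℝ) : d3 x (k • v) = k * d3 x v := by
  simp [d3, Finset.mul_sum]; ring_nf
  exact Finset.sum_congr rfl fun i _ => by ring

/-- The map `Ψ : SO(3) × ℝ/τ*ℤ → M₃`, `Ψ(M,θ) = M x*(·−θ)`, is a bijection: every element
of `M₃ = {M x*(·−θ) : M ∈ O(3), θ ∈ ℝ}` has a unique representation `M x*(·−θ)` with
`M ∈ SO(3)` and `θ ∈ [0,τ*)`, where `x*` is a non-circular non-rectilinear periodic solution
of the central force equation in `ℝ³` lying in the plane `x₃ = 0`, normalized so that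
`x*(0) = (max|x*|, 0, 0)` with positive angular momentum, and `τ*` is the minimal period
of `|x*|`. -/
theorem stmt18 (f V Vd : ℝ → ℝ)
    (hf0 : f 0 = 0) (hfmono : StrictMonoOn f (Set.Ici 0))
    (hV : ∀ r : ℝ, 0 < r → HasDerivAt V (Vd r) r)
    (xs vs : ℝ → Fin 3 → ℝ) (Ts τs : ℝ) (hTs : 0 < Ts) (hτs : 0 < τs)
    -- `xs` is a solution of the central force problem, with derivative `vs`
    (hx0 : ∀ t, xs t ≠ 0)
    (hxv : ∀ t, HasDerivAt xs (vs t) t)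
    (heq : ∀ t, HasDerivAt (fun τ => phiMap f (vs τ))
      ((Vd (en3 (xs t)) / en3 (xs t)) • xs t) t)
    -- periodic
    (hper : Function.Periodic xs Ts)
    -- lies in the plane `x₃ = 0`
    (hplanar : ∀ t, xs t 2 = 0)
    -- non-circular: `|xs|` is non-constant
    (hnc : ¬ ∀ t s : ℝ, en3 (xs t) = en3 (xs s))
    -- non-rectilinear: `xs(t)` and `ẋs(t)` are linearly independent
    (hnr : ∀ t, LinearIndependent ℝ ![xs t, vs t])
    -- `τs` is the minimal period of `|xs|`
    (hτper : Function.Periodic (fun t => en3 (xs t)) τs)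
    (hτmin : ∀ τ : ℝ, 0 < τ → Function.Periodic (fun t => en3 (xs t)) τ → τs ≤ τ)
    -- normalization: `xs 0 = (max|xs|, 0, 0)`, positive angular momentum
    (hnorm : xs 0 = ![en3 (xs 0), 0, 0])
    (hmax : ∀ t, en3 (xs t) ≤ en3 (xs 0))
    (hL : 0 < crossProduct (xs 0) (phiMap f (vs 0)) 2)
    -- uniqueness for the Cauchy problem
    (huniq : ∀ y vy : ℝ → Fin 3 → ℝ,
      (∀ t, y t ≠ 0) →
      (∀ t, HasDerivAt y (vy t) t) →
      (∀ t, HasDerivAt (fun τ => phiMap f (vy τ))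
        ((Vd (en3 (y t)) / en3 (y t)) • y t) t) →
      y 0 = xs 0 → vy 0 = vs 0 → y = xs) :
    ∀ y ∈ {y : ℝ → Fin 3 → ℝ | ∃ (M : Matrix (Fin 3) (Fin 3) ℝ) (θ : ℝ),
        Mᵀ * M = 1 ∧ y = fun t => M *ᵥ xs (t - θ)},
      ∃! Mθ : Matrix (Fin 3) (Fin 3) ℝ × ℝ,
        (Mθ.1ᵀ * Mθ.1 = 1 ∧ Mθ.1.det = 1) ∧ 0 ≤ Mθ.2 ∧ Mθ.2 < τs ∧
          y = fun t => Mθ.1 *ᵥ xs (t - Mθ.2) := by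
  -- velocities never vanish
  have hvs0 : ∀ t, vs t ≠ 0 := by
    intro t
    have h := (hnr t).ne_zero 1
    simpa using h
  -- the max of |xs| at 0 and at τs in s3 form
  have hmax0 : ∀ t, s3 (xs t) ≤ s3 (xs 0) := by
    intro t
    rw [← en3_sq, ← en3_sq]
    exact pow_le_pow_left₀ (en3_nonneg _) (hmax t) 2
  have hnτ : en3 (xs τs) = en3 (xs 0) := by
    have := hτper 0
    simpa using this
  have hmaxτ : ∀ t, s3 (xs t) ≤ s3 (xs τs) := by
    intro t
    rw [s3_eq_of_en3 hnτ]
    exact hmax0 t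
  have hd0 : d3 (xs 0) (vs 0) = 0 := dot_zero_at_max xs vs 0 hxv hmax0
  have hdτ : d3 (xs τs) (vs τs) = 0 := dot_zero_at_max xs vs τs hxv hmaxτ
  -- angular momentum conservation
  set p : ℝ → Fin 3 → ℝ := fun t => phiMap f (vs t) with hpdef
  have hp : ∀ t, HasDerivAt p
      (fun i => (Vd (en3 (xs t)) / en3 (xs t)) * xs t i) t := fun t => heq t
  have hpsmul : ∀ t, p t = (f (en3 (vs t)) / en3 (vs t)) • vs t := by
    intro t
    rw [hpdef]
    simp only []
    rw [phiMap, if_neg (hvs0 t)]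
  have hpar : ∀ t, cr (vs t) (p t) = 0 := by
    intro t
    rw [hpsmul t]
    exact cr_smul_self _ _
  have hLc := cr_const xs vs p (fun t => Vd (en3 (xs t)) / en3 (xs t)) hxv hp hpar
  -- f positivity
  have hfpos : ∀ v : Fin 3 → ℝ, v ≠ 0 → 0 < f (en3 v) := by
    intro v hv
    rw [← hf0]
    exact hfmono (by simp) (by simp [en3_nonneg]) (en3_pos v hv)
  -- |vs τs| = |vs 0|
  have hsv : s3 (vs τs) = s3 (vs 0) := by
    have hL0 := congrArg s3 (hLc τs)
    have hcomp : ∀ t, d3 (xs t) (vs t) = 0 → s3 (cr (xs t) (p t)) =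
        s3 (xs t) * f (en3 (vs t)) ^ 2 := by
      intro t hdt
      rw [lagrange, hpsmul t, d3_smul_right, hdt, mul_zero]
      rw [← hpsmul t, s3_phiMap f (hvs0 t)]
      ring
    rw [hcomp τs hdτ, hcomp 0 hd0] at hL0
    have hsx : s3 (xs τs) = s3 (xs 0) := s3_eq_of_en3 hnτ
    rw [hsx] at hL0
    have hxpos : 0 < s3 (xs 0) := s3_pos (hx0 0)
    have hfeq : f (en3 (vs τs)) ^ 2 = f (en3 (vs 0)) ^ 2 :=
      mul_left_cancel₀ hxpos.ne' hL0
    have hf1 : 0 < f (en3 (vs τs)) := hfpos _ (hvs0 τs)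
    have hf2 : 0 < f (en3 (vs 0)) := hfpos _ (hvs0 0)
    have : f (en3 (vs τs)) = f (en3 (vs 0)) := by nlinarith
    have heq3 : en3 (vs τs) = en3 (vs 0) :=
      hfmono.injOn (by simp [en3_nonneg]) (by simp [en3_nonneg]) this
    exact s3_eq_of_en3 heq3
  -- construct the rotation R with xs(t + τs) = R xs(t)
  obtain ⟨R, hR1, hR2, hRa, hRb⟩ := rot_exists (xs 0) (vs 0) (xs τs) (vs τs)
    (cr_ne_zero_of_li (hnr 0)) (s3_eq_of_en3 hnτ.symm) hsv.symm hd0 hdτ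
  have hRT1 : (Rᵀ)ᵀ * Rᵀ = 1 := by
    rw [Matrix.transpose_transpose]
    exact orth_mul_comm hR1
  have hRR : ∀ w : Fin 3 → ℝ, R *ᵥ (Rᵀ *ᵥ w) = w := by
    intro w
    rw [mulVec_mulVec, orth_mul_comm hR1, one_mulVec]
  have hRTR : ∀ w : Fin 3 → ℝ, Rᵀ *ᵥ (R *ᵥ w) = w := by
    intro w
    rw [mulVec_mulVec, hR1, one_mulVec]
  have hshift : ∀ t, xs (t + τs) = R *ᵥ xs t := by
    set y : ℝ → Fin 3 → ℝ := fun t => Rᵀ *ᵥ xs (t + τs) with hydef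
    set vy : ℝ → Fin 3 → ℝ := fun t => Rᵀ *ᵥ vs (t + τs) with hvydef
    have hy0 : y 0 = xs 0 := by
      rw [hydef]
      simp only [zero_add]
      rw [← hRa, hRTR]
    have hvy0 : vy 0 = vs 0 := by
      rw [hvydef]
      simp only [zero_add]
      rw [← hRb, hRTR]
    have hyne : ∀ t, y t ≠ 0 := fun t => mulVec_ne_zero Rᵀ hRT1 (hx0 _)
    have hxshift : ∀ t, HasDerivAt (fun s => xs (s + τs)) (vs (t + τs)) t := by
      intro t
      have := (hxv (t + τs)).scomp t ((hasDerivAt_id t).add_const τs)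
      simpa [Function.comp_def] using this
    have hvshift : ∀ t, HasDerivAt (fun s => p (s + τs))
        (fun i => (Vd (en3 (xs (t + τs))) / en3 (xs (t + τs))) * xs (t + τs) i) t := by
      intro t
      have := (hp (t + τs)).scomp t ((hasDerivAt_id t).add_const τs)
      simpa [Function.comp_def] using this
    have hyd : ∀ t, HasDerivAt y (vy t) t := fun t => hasDerivAt_mulVec Rᵀ (hxshift t)
    have hyeq : ∀ t, HasDerivAt (fun τ => phiMap f (vy τ))
        ((Vd (en3 (y t)) / en3 (y t)) • y t) t := by
      intro t
      have hfe : (fun τ => phiMap f (vy τ)) = fun τ => Rᵀ *ᵥ p (τ + τs) := by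
        funext τ
        rw [hvydef]
        exact phiMap_mulVec f Rᵀ hRT1 (vs (τ + τs))
      rw [hfe]
      have hd := hasDerivAt_mulVec Rᵀ (hvshift t)
      have hen : en3 (y t) = en3 (xs (t + τs)) := en3_mulVec Rᵀ hRT1 _
      convert hd using 1
      rw [hen]
      funext i
      simp [hydef, Matrix.mulVec, dotProduct, Finset.mul_sum]
      exact Finset.sum_congr rfl fun j _ => by ring
    have := huniq y vy hyne hyd hyeq hy0 hvy0
    intro t
    have h := congrFun this t
    rw [hydef] at h
    simp only [] at h
    rw [← h, hRR]
  -- the symmetry set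
  set Symm : ℝ → Prop := fun δ => ∃ S : Matrix (Fin 3) (Fin 3) ℝ,
    Sᵀ * S = 1 ∧ S.det = 1 ∧ ∀ s, xs (s - δ) = S *ᵥ xs s with hSymmdef
  have horthmul : ∀ (A B : Matrix (Fin 3) (Fin 3) ℝ), Aᵀ * A = 1 → Bᵀ * B = 1 →
      (A * B)ᵀ * (A * B) = 1 := by
    intro A B hA hB
    calc (A * B)ᵀ * (A * B) = Bᵀ * (Aᵀ * (A * B)) := by
          rw [Matrix.transpose_mul, Matrix.mul_assoc]
      _ = Bᵀ * ((Aᵀ * A) * B) := by rw [Matrix.mul_assoc]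
      _ = Bᵀ * B := by rw [hA, Matrix.one_mul]
      _ = 1 := hB
  have hSymm0 : Symm 0 := ⟨1, by simp, by simp, fun s => by simp⟩
  have hSymmτ : Symm τs := by
    refine ⟨Rᵀ, hRT1, by rw [Matrix.det_transpose]; exact hR2, fun s => ?_⟩
    have := hshift (s - τs)
    rw [sub_add_cancel] at this
    rw [this, hRTR]
  have hSymmneg : ∀ δ, Symm δ → Symm (-δ) := by
    rintro δ ⟨S, hS1, hS2, hS3⟩
    refine ⟨Sᵀ, by rw [Matrix.transpose_transpose]; exact orth_mul_comm hS1,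
      by rw [Matrix.det_transpose]; exact hS2, fun s => ?_⟩
    have := hS3 (s + δ)
    rw [add_sub_cancel_right] at this
    rw [sub_neg_eq_add, this, mulVec_mulVec, hS1, one_mulVec]
  have hSymmadd : ∀ δ ε, Symm δ → Symm ε → Symm (δ + ε) := by
    rintro δ ε ⟨S, hS1, hS2, hS3⟩ ⟨T, hT1, hT2, hT3⟩
    refine ⟨S * T, horthmul S T hS1 hT1,
      by rw [Matrix.det_mul, hS2, hT2, one_mul], fun s => ?_⟩
    have h1 : xs (s - ε - δ) = S *ᵥ xs (s - ε) := hS3 (s - ε)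
    rw [hT3 s] at h1
    rw [show s - (δ + ε) = s - ε - δ by ring, h1, mulVec_mulVec]
  have hSymmz : ∀ k : ℤ, Symm ((k : ℝ) * τs) := by
    intro k
    induction k using Int.induction_on with
    | zero => simpa using hSymm0
    | succ n ih =>
        have e : ((n + 1 : ℤ) : ℝ) * τs = ((n : ℤ) : ℝ) * τs + τs := by push_cast; ring
        rw [e]
        exact hSymmadd _ _ ih hSymmτ
    | pred n ih =>
        have e : ((-n - 1 : ℤ) : ℝ) * τs = ((-n : ℤ) : ℝ) * τs + -τs := by push_cast; ring
        rw [e]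
        exact hSymmadd _ _ ih (hSymmneg _ hSymmτ)
  -- uniqueness of representations
  have key : ∀ (M₁ : Matrix (Fin 3) (Fin 3) ℝ) (θ₁ : ℝ) (M₂ : Matrix (Fin 3) (Fin 3) ℝ)
      (θ₂ : ℝ), M₁ᵀ * M₁ = 1 → M₂ᵀ * M₂ = 1 → 0 ≤ θ₁ → θ₁ < τs → 0 ≤ θ₂ → θ₂ < τs →
      M₁.det = 1 → M₂.det = 1 →
      (∀ t, M₁ *ᵥ xs (t - θ₁) = M₂ *ᵥ xs (t - θ₂)) → M₁ = M₂ ∧ θ₁ = θ₂ := by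
    intro M₁ θ₁ M₂ θ₂ hM₁ hM₂ hθ₁0 hθ₁τ hθ₂0 hθ₂τ hdet₁ hdet₂ hMeq
    set T := M₁ᵀ * M₂ with hTdef
    have hT1 : Tᵀ * T = 1 := by
      calc (M₁ᵀ * M₂)ᵀ * (M₁ᵀ * M₂) = M₂ᵀ * ((M₁ᵀ)ᵀ * (M₁ᵀ * M₂)) := by
            rw [Matrix.transpose_mul, Matrix.mul_assoc]
        _ = M₂ᵀ * ((M₁ * M₁ᵀ) * M₂) := by rw [Matrix.transpose_transpose, Matrix.mul_assoc]
        _ = M₂ᵀ * M₂ := by rw [orth_mul_comm hM₁, Matrix.one_mul]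
        _ = 1 := hM₂
    have hTdet : T.det = 1 := by
      rw [hTdef, Matrix.det_mul, Matrix.det_transpose, hdet₁, hdet₂, one_mul]
    have hTs' : ∀ s, xs (s + (θ₂ - θ₁)) = T *ᵥ xs s := by
      intro s
      have h := hMeq (s + θ₂)
      have h1 : M₁ᵀ *ᵥ (M₁ *ᵥ xs (s + θ₂ - θ₁)) = M₁ᵀ *ᵥ (M₂ *ᵥ xs (s + θ₂ - θ₂)) := by
        rw [h]
      rw [mulVec_mulVec, mulVec_mulVec, hM₁, one_mulVec, ← hTdef] at h1
      rw [show s + (θ₂ - θ₁) = s + θ₂ - θ₁ by ring, h1, add_sub_cancel_right]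
    have hδper : Function.Periodic (fun t => en3 (xs t)) (θ₂ - θ₁) := by
      intro s
      simp only []
      rw [hTs' s, en3_mulVec T hT1]
    have hθeq : θ₁ = θ₂ := by
      by_contra hne
      rcases lt_or_gt_of_ne hne with h | h
      · have := hτmin (θ₂ - θ₁) (by linarith) hδper
        linarith
      · have := hτmin (θ₁ - θ₂) (by linarith) (by simpa using hδper.neg)
        linarith
    have hTfix : ∀ s, T *ᵥ xs s = xs s := by
      intro s
      have := hTs' s
      rw [hθeq] at this
      simp at this
      exact this.symm
    have hTvfix : T *ᵥ vs 0 = vs 0 := by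
      have hF : (fun s => T *ᵥ xs s) = xs := funext hTfix
      have h1 : HasDerivAt (fun s => T *ᵥ xs s) (T *ᵥ vs 0) 0 :=
        hasDerivAt_mulVec T (hxv 0)
      rw [hF] at h1
      exact h1.unique (hxv 0)
    have hT_id : T = 1 := fix_eq_one T hT1 hTdet (xs 0) (vs 0)
      (cr_ne_zero_of_li (hnr 0)) (hTfix 0) hTvfix
    constructor
    · have h : M₁ * T = M₁ * 1 := by rw [hT_id]
      rw [hTdef, ← Matrix.mul_assoc, orth_mul_comm hM₁, Matrix.one_mul, Matrix.mul_one] at h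
      exact h.symm
    · exact hθeq
  -- main argument
  rintro y ⟨M, θ, hM, hy⟩
  -- replace M by a special orthogonal matrix
  have hdet2 : M.det * M.det = 1 := by
    have := congrArg Matrix.det hM
    rwa [Matrix.det_mul, Matrix.det_transpose, Matrix.det_one] at this
  set D : Matrix (Fin 3) (Fin 3) ℝ := Matrix.diagonal ![1,1,-1] with hDdef
  have hDx : ∀ s, D *ᵥ xs s = xs s := by
    intro s
    funext i
    rw [hDdef, Matrix.mulVec_diagonal]
    fin_cases i
    · norm_num
    · norm_num
    · show (-1 : ℝ) * xs s 2 = xs s 2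
      rw [hplanar s]; ring
  obtain ⟨M₁, hM₁o, hM₁d, hM₁x⟩ : ∃ M₁ : Matrix (Fin 3) (Fin 3) ℝ,
      M₁ᵀ * M₁ = 1 ∧ M₁.det = 1 ∧ ∀ s, M₁ *ᵥ xs s = M *ᵥ xs s := by
    rcases mul_self_eq_one_iff.1 hdet2 with h | h
    · exact ⟨M, hM, h, fun s => rfl⟩
    · refine ⟨M * D, ?_, ?_, fun s => ?_⟩
      · have hDo : Dᵀ * D = 1 := by
          ext i j
          fin_cases i <;> fin_cases j <;>
            simp [hDdef, Matrix.mul_apply, Fin.sum_univ_three, Matrix.diagonal,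
              Matrix.one_apply] <;> norm_num
        exact horthmul M D hM hDo
      · rw [Matrix.det_mul, h, hDdef, Matrix.det_diagonal, Fin.prod_univ_three]
        norm_num [Matrix.cons_val_two]
      · rw [← mulVec_mulVec, hDx s]
  -- reduce θ modulo τs
  set k : ℤ := ⌊θ / τs⌋ with hkdef
  set θ₀ : ℝ := θ - k * τs with hθ₀def
  have hθ₀0 : 0 ≤ θ₀ := Int.sub_floor_div_mul_nonneg θ hτs
  have hθ₀τ : θ₀ < τs := Int.sub_floor_div_mul_lt θ hτs
  obtain ⟨S, hS1, hS2, hS3⟩ := hSymmz k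
  have hrep : y = fun t => (M₁ * S) *ᵥ xs (t - θ₀) := by
    funext t
    rw [hy]
    have h1 : xs (t - θ₀ - (k : ℝ) * τs) = S *ᵥ xs (t - θ₀) := hS3 (t - θ₀)
    have h2 : t - θ₀ - (k : ℝ) * τs = t - θ := by rw [hθ₀def]; ring
    rw [h2] at h1
    rw [← mulVec_mulVec, ← h1, hM₁x (t - θ)]
  refine ⟨(M₁ * S, θ₀), ⟨⟨horthmul M₁ S hM₁o hS1, by
    rw [Matrix.det_mul, hM₁d, hS2, one_mul]⟩, hθ₀0, hθ₀τ, hrep⟩, ?_⟩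
  rintro ⟨Mz, θz⟩ ⟨⟨hzo, hzd⟩, hz0, hzτ, hzy⟩
  have hfeq : ∀ t, Mz *ᵥ xs (t - θz) = (M₁ * S) *ᵥ xs (t - θ₀) := by
    intro t
    have := (hzy.symm.trans hrep)
    exact congrFun this t
  obtain ⟨hMeq, hθeq⟩ := key Mz θz (M₁ * S) θ₀ hzo (horthmul M₁ S hM₁o hS1) hz0 hzτ
    hθ₀0 hθ₀τ hzd (by rw [Matrix.det_mul, hM₁d, hS2, one_mul]) hfeq
  exact Prod.ext hMeq hθeq
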